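/- Suppose Γ satisfies the separation condition and the induced measure m satisfies the interior balance equations. Then every (ρ,σ) ∈ Γ satisfies Q(ρ,σ) = 0. -/

import Mathlib

open Finset

/-- The index set `{-1, 0, 1}` for the jumps of the random walk. -/
def II : Finset ℤ := {-1, 0, 1}

/-- The kernel `Q(x,y) = ∑_{s,t ∈ {-1,0,1}} p(s,t) x^{1-s} y^{1-t} − x y`. -/
noncomputable def Qf (p : ℤ → ℤ → ℝ) (x y : ℝ) : ℝ :=
  (∑ s ∈ II, ∑ t ∈ II, p s t * x ^ (1 - s).toNat * y ^ (1 - t).toNat) - x * y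

/-- The measure on `ℕ × ℕ` induced by the set of geometric terms `Γ`
with coefficients `α`. -/
noncomputable def inducedMeasure (Γ : Set (ℝ × ℝ)) (α : ℝ × ℝ → ℝ) (i j : ℕ) : ℝ :=
  ∑' q : Γ, α q * (q : ℝ × ℝ).1 ^ i * (q : ℝ × ℝ).2 ^ j

/-- The absolute-convergence assumption on the coefficients. -/
def AbsConv (Γ : Set (ℝ × ℝ)) (α : ℝ × ℝ → ℝ) : Prop :=
  Summable (fun q : Γ => |α q| * (1 - (q : ℝ × ℝ).1)⁻¹ * (1 - (q : ℝ × ℝ).2)⁻¹)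

/-- The separation condition on `Γ`. -/
def Separation (Γ : Set (ℝ × ℝ)) : Prop :=
  ∀ q ∈ Γ, ∃ w v : ℕ, 0 < w ∧ 0 < v ∧
    ∀ q' ∈ Γ, q' ≠ q → q'.1 ^ w * q'.2 ^ v ≠ q.1 ^ w * q.2 ^ v

/-- The interior balance equations for a measure `m` on `ℕ × ℕ`. -/
def InteriorBalance (p : ℤ → ℤ → ℝ) (m : ℕ → ℕ → ℝ) : Prop :=
  ∀ i j : ℕ, 1 ≤ i → 1 ≤ j →
    m i j = ∑ s ∈ II, ∑ t ∈ II, m ((i : ℤ) - s).toNat ((j : ℤ) - t).toNat * p s t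

namespace Stmt7Aux

lemma mem_II_iff {s : ℤ} : s ∈ II ↔ s = -1 ∨ s = 0 ∨ s = 1 := by
  simp [II]

lemma summable_abs_alpha {Γ : Set (ℝ × ℝ)} {α : ℝ × ℝ → ℝ}
    (hΓU : Γ ⊆ Set.Ioo (0:ℝ) 1 ×ˢ Set.Ioo (0:ℝ) 1) (hconv : AbsConv Γ α) :
    Summable (fun q : Γ => |α q|) := by
  refine hconv.of_nonneg_of_le (fun q => abs_nonneg _) (fun q => ?_)
  obtain ⟨⟨h1, h2⟩, h3, h4⟩ := hΓU q.2
  have e1 : (1:ℝ) ≤ (1 - (q:ℝ×ℝ).1)⁻¹ := by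
    rw [le_inv_comm₀ one_pos (by linarith)]
    simp; linarith
  have e2 : (1:ℝ) ≤ (1 - (q:ℝ×ℝ).2)⁻¹ := by
    rw [le_inv_comm₀ one_pos (by linarith)]
    simp; linarith
  have t1 : |α ↑q| * 1 ≤ |α ↑q| * (1 - (q:ℝ×ℝ).1)⁻¹ :=
    mul_le_mul_of_nonneg_left e1 (abs_nonneg _)
  have h0 : 0 ≤ |α ↑q| * (1 - (q:ℝ×ℝ).1)⁻¹ := le_trans (by positivity) t1
  have t2 : |α ↑q| * (1 - (q:ℝ×ℝ).1)⁻¹ * 1 ≤ |α ↑q| * (1 - (q:ℝ×ℝ).1)⁻¹ * (1 - (q:ℝ×ℝ).2)⁻¹ :=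
    mul_le_mul_of_nonneg_left e2 h0
  simpa using le_trans (by simpa using t1) t2

lemma summable_mul {Γ : Set (ℝ × ℝ)} {α : ℝ × ℝ → ℝ}
    (hS : Summable (fun q : Γ => |α q|)) (c : Γ → ℝ) (K : ℝ)
    (hc : ∀ q, |c q| ≤ K) : Summable (fun q : Γ => α q * c q) := by
  apply Summable.of_abs
  refine (hS.mul_right K).of_nonneg_of_le (fun q => abs_nonneg _) (fun q => ?_)
  rw [abs_mul]
  exact mul_le_mul_of_nonneg_left (hc q) (abs_nonneg _)

lemma p_le_one {p : ℤ → ℤ → ℝ} (hp : ∀ s ∈ II, ∀ t ∈ II, 0 ≤ p s t)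
    (hp1 : ∑ s ∈ II, ∑ t ∈ II, p s t = 1) {s t : ℤ} (hs : s ∈ II) (ht : t ∈ II) :
    p s t ≤ 1 := by
  calc p s t ≤ ∑ t ∈ II, p s t := Finset.single_le_sum (fun t' ht' => hp s hs t' ht') ht
    _ ≤ ∑ s ∈ II, ∑ t ∈ II, p s t :=
        Finset.single_le_sum
          (fun s' hs' => Finset.sum_nonneg fun t' ht' => hp s' hs' t' ht') hs
    _ = 1 := hp1

lemma Qf_abs_le {p : ℤ → ℤ → ℝ} (hp : ∀ s ∈ II, ∀ t ∈ II, 0 ≤ p s t)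
    (hp1 : ∑ s ∈ II, ∑ t ∈ II, p s t = 1) {x y : ℝ}
    (hx0 : 0 ≤ x) (hx1 : x ≤ 1) (hy0 : 0 ≤ y) (hy1 : y ≤ 1) :
    |Qf p x y| ≤ 1 := by
  have hA0 : 0 ≤ ∑ s ∈ II, ∑ t ∈ II, p s t * x ^ (1 - s).toNat * y ^ (1 - t).toNat := by
    refine Finset.sum_nonneg fun s hs => Finset.sum_nonneg fun t ht => ?_
    have := hp s hs t ht
    positivity
  have hA1 : (∑ s ∈ II, ∑ t ∈ II, p s t * x ^ (1 - s).toNat * y ^ (1 - t).toNat) ≤ 1 := by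
    calc (∑ s ∈ II, ∑ t ∈ II, p s t * x ^ (1 - s).toNat * y ^ (1 - t).toNat)
        ≤ ∑ s ∈ II, ∑ t ∈ II, p s t := by
          refine Finset.sum_le_sum fun s hs => Finset.sum_le_sum fun t ht => ?_
          have h1 : x ^ (1 - s).toNat ≤ 1 := pow_le_one₀ hx0 hx1
          have h2 : y ^ (1 - t).toNat ≤ 1 := pow_le_one₀ hy0 hy1
          have h3 : (0:ℝ) ≤ x ^ (1 - s).toNat := by positivity
          have h4 : (0:ℝ) ≤ y ^ (1 - t).toNat := by positivity
          have h5 := hp s hs t ht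
          exact le_trans (mul_le_of_le_one_right (mul_nonneg h5 h3) h2)
            (mul_le_of_le_one_right h5 h1)
      _ = 1 := hp1
  have hxy0 : 0 ≤ x * y := by positivity
  have hxy1 : x * y ≤ 1 := by nlinarith
  rw [Qf, abs_le]
  constructor <;> linarith

lemma exp_eq {s : ℤ} (hs : s ∈ II) (n : ℕ) :
    (((n + 1 : ℕ) : ℤ) - s).toNat = n + (1 - s).toNat := by
  rw [mem_II_iff] at hs
  rcases hs with rfl | rfl | rfl <;> omega

lemma moments_zero {p : ℤ → ℤ → ℝ} {Γ : Set (ℝ × ℝ)} {α : ℝ × ℝ → ℝ}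
    (hp : ∀ s ∈ II, ∀ t ∈ II, 0 ≤ p s t)
    (hp1 : ∑ s ∈ II, ∑ t ∈ II, p s t = 1)
    (hΓU : Γ ⊆ Set.Ioo (0:ℝ) 1 ×ˢ Set.Ioo (0:ℝ) 1)
    (hconv : AbsConv Γ α)
    (hbal : InteriorBalance p (inducedMeasure Γ α)) (i j : ℕ) :
    ∑' q : Γ, α q * Qf p (q:ℝ×ℝ).1 (q:ℝ×ℝ).2 * (q:ℝ×ℝ).1 ^ i * (q:ℝ×ℝ).2 ^ j = 0 := by
  have hS := summable_abs_alpha hΓU hconv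
  have hfacts : ∀ q : Γ, 0 < (q:ℝ×ℝ).1 ∧ (q:ℝ×ℝ).1 < 1 ∧ 0 < (q:ℝ×ℝ).2 ∧ (q:ℝ×ℝ).2 < 1 := by
    intro q
    obtain ⟨⟨h1, h2⟩, h3, h4⟩ := hΓU q.2
    exact ⟨h1, h2, h3, h4⟩
  have hpowx : ∀ (q : Γ) (n : ℕ), (q:ℝ×ℝ).1 ^ n ≤ 1 :=
    fun q n => pow_le_one₀ (hfacts q).1.le (hfacts q).2.1.le
  have hpowy : ∀ (q : Γ) (n : ℕ), (q:ℝ×ℝ).2 ^ n ≤ 1 :=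
    fun q n => pow_le_one₀ (hfacts q).2.2.1.le (hfacts q).2.2.2.le
  have hpowx0 : ∀ (q : Γ) (n : ℕ), 0 ≤ (q:ℝ×ℝ).1 ^ n :=
    fun q n => pow_nonneg (hfacts q).1.le n
  have hpowy0 : ∀ (q : Γ) (n : ℕ), 0 ≤ (q:ℝ×ℝ).2 ^ n :=
    fun q n => pow_nonneg (hfacts q).2.2.1.le n
  -- the summand on the right-hand side of the balance equation, per (s,t)
  set g : ℤ → ℤ → Γ → ℝ := fun s t q =>
    α q * (q:ℝ×ℝ).1 ^ i * (q:ℝ×ℝ).2 ^ j *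
      (p s t * (q:ℝ×ℝ).1 ^ (1 - s).toNat * (q:ℝ×ℝ).2 ^ (1 - t).toNat) with hg
  have habs : ∀ s ∈ II, ∀ t ∈ II, ∀ q : Γ,
      |(q:ℝ×ℝ).1 ^ i * (q:ℝ×ℝ).2 ^ j *
        (p s t * (q:ℝ×ℝ).1 ^ (1 - s).toNat * (q:ℝ×ℝ).2 ^ (1 - t).toNat)| ≤ 1 := by
    intro s hs t ht q
    have h5 := hp s hs t ht
    have h6 := p_le_one hp hp1 hs ht
    have hn1 : 0 ≤ (q:ℝ×ℝ).1 ^ i * (q:ℝ×ℝ).2 ^ j :=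
      mul_nonneg (hpowx0 q i) (hpowy0 q j)
    have hn2 : 0 ≤ p s t * (q:ℝ×ℝ).1 ^ (1 - s).toNat * (q:ℝ×ℝ).2 ^ (1 - t).toNat :=
      mul_nonneg (mul_nonneg h5 (hpowx0 q _)) (hpowy0 q _)
    rw [abs_of_nonneg (mul_nonneg hn1 hn2)]
    have hb1 : (q:ℝ×ℝ).1 ^ i * (q:ℝ×ℝ).2 ^ j ≤ 1 :=
      mul_le_one₀ (hpowx q i) (hpowy0 q j) (hpowy q j)
    have hb2 : p s t * (q:ℝ×ℝ).1 ^ (1 - s).toNat * (q:ℝ×ℝ).2 ^ (1 - t).toNat ≤ 1 :=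
      mul_le_one₀ (mul_le_one₀ h6 (hpowx0 q _) (hpowx q _)) (hpowy0 q _) (hpowy q _)
    exact mul_le_one₀ hb1 hn2 hb2
  have hgsum : ∀ s ∈ II, ∀ t ∈ II, Summable (g s t) := by
    intro s hs t ht
    have := summable_mul hS
      (fun q : Γ => (q:ℝ×ℝ).1 ^ i * (q:ℝ×ℝ).2 ^ j *
        (p s t * (q:ℝ×ℝ).1 ^ (1 - s).toNat * (q:ℝ×ℝ).2 ^ (1 - t).toNat)) 1
      (habs s hs t ht)
    refine this.congr fun q => by simp only [hg]; ring
  have hAsum : Summable (fun q : Γ => α q * (q:ℝ×ℝ).1 ^ (i+1) * (q:ℝ×ℝ).2 ^ (j+1)) := by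
    have := summable_mul hS (fun q : Γ => (q:ℝ×ℝ).1 ^ (i+1) * (q:ℝ×ℝ).2 ^ (j+1)) 1
      (fun q => by
        rw [abs_of_nonneg (mul_nonneg (hpowx0 q _) (hpowy0 q _))]
        exact mul_le_one₀ (hpowx q _) (hpowy0 q _) (hpowy q _))
    exact this.congr fun q => by ring
  have hGsum : Summable (fun q : Γ => ∑ s ∈ II, ∑ t ∈ II, g s t q) := by
    apply summable_sum
    intro s hs
    exact summable_sum fun t ht => hgsum s hs t ht
  have hb := hbal (i+1) (j+1) (by omega) (by omega)
  unfold inducedMeasure at hb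
  -- rewrite RHS of hb
  have hb2 : (∑' q : Γ, α q * (q:ℝ×ℝ).1 ^ (i+1) * (q:ℝ×ℝ).2 ^ (j+1)) =
      ∑' q : Γ, ∑ s ∈ II, ∑ t ∈ II, g s t q := by
    rw [hb, Summable.tsum_finsetSum (fun s hs => summable_sum fun t ht => hgsum s hs t ht)]
    refine Finset.sum_congr rfl fun s hs => ?_
    rw [Summable.tsum_finsetSum (fun t ht => hgsum s hs t ht)]
    refine Finset.sum_congr rfl fun t ht => ?_
    rw [← tsum_mul_right]
    refine tsum_congr fun q => ?_
    rw [hg]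
    simp only
    rw [exp_eq hs i, exp_eq ht j, pow_add, pow_add]
    ring
  have key : ∑' q : Γ, (∑ s ∈ II, ∑ t ∈ II, g s t q
      - α q * (q:ℝ×ℝ).1 ^ (i+1) * (q:ℝ×ℝ).2 ^ (j+1)) = 0 := by
    rw [Summable.tsum_sub hGsum hAsum, ← hb2, sub_self]
  rw [← key]
  refine tsum_congr fun q => ?_
  rw [Qf, hg]
  simp only
  simp only [← Finset.mul_sum]
  ring


def K01 : Set (ℝ × ℝ) := Set.Icc (0:ℝ) 1 ×ˢ Set.Icc (0:ℝ) 1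

instance : CompactSpace K01 :=
  isCompact_iff_compactSpace.mp (isCompact_Icc.prod isCompact_Icc)

noncomputable def FST : C(K01, ℝ) :=
  ⟨fun x => (x : ℝ × ℝ).1, continuous_fst.comp continuous_subtype_val⟩

noncomputable def SND : C(K01, ℝ) :=
  ⟨fun x => (x : ℝ × ℝ).2, continuous_snd.comp continuous_subtype_val⟩

lemma mem_monoidClosure (f : C(K01, ℝ))
    (hf : f ∈ Submonoid.closure ({FST, SND} : Set C(K01, ℝ))) :
    ∃ i j : ℕ, f = FST ^ i * SND ^ j := by
  induction hf using Submonoid.closure_induction with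
  | mem x hx =>
    rcases hx with rfl | hx
    · exact ⟨1, 0, by simp⟩
    · rw [Set.mem_singleton_iff] at hx
      subst hx
      exact ⟨0, 1, by simp⟩
  | one => exact ⟨0, 0, by simp⟩
  | mul x y hx hy ihx ihy =>
    obtain ⟨i, j, rfl⟩ := ihx
    obtain ⟨k, l, rfl⟩ := ihy
    exact ⟨i + k, j + l, by rw [pow_add, pow_add]; ring⟩

lemma adjoin_dense :
    (Algebra.adjoin ℝ ({FST, SND} : Set C(K01, ℝ))).topologicalClosure = ⊤ := by
  apply ContinuousMap.subalgebra_topologicalClosure_eq_top_of_separatesPoints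
  intro x y hxy
  have hxy' : (x : ℝ × ℝ) ≠ (y : ℝ × ℝ) := fun h => hxy (Subtype.ext h)
  by_cases h1 : (x : ℝ × ℝ).1 = (y : ℝ × ℝ).1
  · have h2 : (x : ℝ × ℝ).2 ≠ (y : ℝ × ℝ).2 := by
      intro h2; exact hxy' (Prod.ext h1 h2)
    exact ⟨SND, ⟨SND, Algebra.subset_adjoin (by simp), rfl⟩, h2⟩
  · exact ⟨FST, ⟨FST, Algebra.subset_adjoin (by simp), rfl⟩, h1⟩

lemma atom_zero {Γ : Set (ℝ × ℝ)} (hΓU : Γ ⊆ Set.Ioo (0:ℝ) 1 ×ˢ Set.Ioo (0:ℝ) 1)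
    (β : Γ → ℝ) (hβ : Summable (fun q : Γ => |β q|))
    (hmom : ∀ i j : ℕ, ∑' q : Γ, β q * (q:ℝ×ℝ).1 ^ i * (q:ℝ×ℝ).2 ^ j = 0)
    (q0 : Γ) : β q0 = 0 := by
  classical
  have hmem : ∀ q : Γ, (q : ℝ × ℝ) ∈ K01 := by
    intro q
    obtain ⟨⟨h1, h2⟩, h3, h4⟩ := hΓU q.2
    exact ⟨⟨h1.le, h2.le⟩, ⟨h3.le, h4.le⟩⟩
  set e : Γ → K01 := fun q => ⟨(q : ℝ × ℝ), hmem q⟩ with he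
  have einj : Function.Injective e := by
    intro a b hab
    have h := congrArg Subtype.val hab
    exact Subtype.ext h
  set l : C(K01, ℝ) → ℝ := fun f => ∑' q : Γ, β q * f (e q) with hl
  set B : ℝ := ∑' q : Γ, |β q| with hB
  have hB0 : 0 ≤ B := tsum_nonneg fun q => abs_nonneg _
  have hlsum : ∀ f : C(K01, ℝ), Summable (fun q : Γ => β q * f (e q)) := by
    intro f
    apply Summable.of_abs
    refine (hβ.mul_right ‖f‖).of_nonneg_of_le (fun q => abs_nonneg _) (fun q => ?_)
    rw [abs_mul]
    refine mul_le_mul_of_nonneg_left ?_ (abs_nonneg _)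
    simpa [Real.norm_eq_abs] using ContinuousMap.norm_coe_le_norm f (e q)
  have hlabs : ∀ f : C(K01, ℝ), Summable (fun q : Γ => |β q * f (e q)|) :=
    fun f => (hlsum f).abs
  have hlbound : ∀ f : C(K01, ℝ), |l f| ≤ B * ‖f‖ := by
    intro f
    have h1 : |l f| ≤ ∑' q : Γ, |β q * f (e q)| := by
      have := norm_tsum_le_tsum_norm (f := fun q : Γ => β q * f (e q))
        ((hlabs f).congr fun q => (Real.norm_eq_abs _).symm)
      simp only [Real.norm_eq_abs] at this
      exact this
    have h2 : (∑' q : Γ, |β q * f (e q)|) ≤ ∑' q : Γ, |β q| * ‖f‖ := by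
      refine Summable.tsum_le_tsum (fun q => ?_) (hlabs f) (hβ.mul_right _)
      rw [abs_mul]
      refine mul_le_mul_of_nonneg_left ?_ (abs_nonneg _)
      simpa [Real.norm_eq_abs] using ContinuousMap.norm_coe_le_norm f (e q)
    calc |l f| ≤ ∑' q : Γ, |β q| * ‖f‖ := le_trans h1 h2
      _ = B * ‖f‖ := tsum_mul_right
  have hsub : ∀ f g : C(K01, ℝ), l (f - g) = l f - l g := by
    intro f g
    have : (fun q : Γ => β q * (f - g) (e q)) =
        fun q : Γ => β q * f (e q) - β q * g (e q) := by
      funext q; simp [mul_sub]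
    rw [hl]
    simp only [this]
    exact Summable.tsum_sub (hlsum f) (hlsum g)
  have hmono : ∀ i j : ℕ, l (FST ^ i * SND ^ j) = 0 := by
    intro i j
    have : (fun q : Γ => β q * (FST ^ i * SND ^ j) (e q)) =
        fun q : Γ => β q * (q:ℝ×ℝ).1 ^ i * (q:ℝ×ℝ).2 ^ j := by
      funext q
      simp [FST, SND, mul_assoc]
      exact Or.inl rfl
    rw [hl]
    simp only [this]
    exact hmom i j
  have hA0 : ∀ f ∈ Algebra.adjoin ℝ ({FST, SND} : Set C(K01, ℝ)), l f = 0 := by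
    intro f hf
    have hf' : f ∈ Submodule.span ℝ
        ((Submonoid.closure ({FST, SND} : Set C(K01, ℝ)) : Set C(K01, ℝ))) := by
      rw [← Algebra.adjoin_eq_span]
      exact hf
    clear hf
    induction hf' using Submodule.span_induction with
    | mem x hx =>
      obtain ⟨i, j, rfl⟩ := mem_monoidClosure x hx
      exact hmono i j
    | zero =>
      rw [hl]; simp
    | add x y hx hy ihx ihy =>
      have : (fun q : Γ => β q * (x + y) (e q)) =
          fun q : Γ => β q * x (e q) + β q * y (e q) := by
        funext q; simp [mul_add]
      have hxy : l (x + y) = l x + l y := by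
        rw [hl]; simp only [this]; exact Summable.tsum_add (hlsum x) (hlsum y)
      rw [hxy, ihx, ihy, add_zero]
    | smul a x hx ih =>
      have : (fun q : Γ => β q * (a • x) (e q)) =
          fun q : Γ => a * (β q * x (e q)) := by
        funext q; simp [ContinuousMap.smul_apply]; ring
      have hax : l (a • x) = a * l x := by
        rw [hl]; simp only [this]; exact tsum_mul_left
      rw [hax, ih, mul_zero]
  have hall : ∀ f : C(K01, ℝ), l f = 0 := by
    intro f
    have h1 : f ∈ (Algebra.adjoin ℝ ({FST, SND} : Set C(K01, ℝ))).topologicalClosure := by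
      rw [adjoin_dense]; exact Algebra.mem_top
    have h2 : f ∈ closure ((Algebra.adjoin ℝ ({FST, SND} : Set C(K01, ℝ)) :
        Subalgebra ℝ C(K01, ℝ)) : Set C(K01, ℝ)) := h1
    have key : ∀ ε > (0:ℝ), |l f| ≤ B * ε := by
      intro ε hε
      obtain ⟨g, hgA, hdist⟩ := Metric.mem_closure_iff.mp h2 ε hε
      have hg0 : l g = 0 := hA0 g hgA
      have : |l f| = |l (f - g)| := by rw [hsub, hg0, sub_zero]
      rw [this]
      calc |l (f - g)| ≤ B * ‖f - g‖ := hlbound _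
        _ ≤ B * ε := by
            refine mul_le_mul_of_nonneg_left ?_ hB0
            rw [← dist_eq_norm]
            exact hdist.le
    by_contra hne
    have hpos : 0 < |l f| := abs_pos.mpr hne
    have := key (|l f| / (B + 1)) (by positivity)
    have hB1 : (0:ℝ) < B + 1 := by linarith
    rw [div_eq_inv_mul, ← mul_assoc] at this
    have h3 : B * (B + 1)⁻¹ < 1 := by
      rw [mul_inv_lt_iff₀ hB1]
      linarith
    nlinarith
  -- now the tent-function argument
  have main : ∀ ε > (0:ℝ), |β q0| < ε := by
    intro ε hε
    -- choose a finite set capturing all but ε of the mass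
    have hev : ∀ᶠ s : Finset Γ in Filter.atTop, B - ε < ∑ q ∈ s, |β q| :=
      hβ.hasSum.eventually (eventually_gt_nhds (by linarith))
    obtain ⟨s0, hs0⟩ := hev.exists
    set s : Finset Γ := insert q0 s0 with hs
    have hq0s : q0 ∈ s := Finset.mem_insert_self _ _
    have hsub0 : ∑ q ∈ s0, |β q| ≤ ∑ q ∈ s, |β q| :=
      Finset.sum_le_sum_of_subset_of_nonneg (Finset.subset_insert _ _)
        (fun q _ _ => abs_nonneg _)
    have htail : (∑' q : ((↑s : Set Γ)ᶜ : Set Γ), |β q.1|) < ε := by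
      have := Summable.sum_add_tsum_compl (s := s) hβ
      have : (∑' q : ((↑s : Set Γ)ᶜ : Set Γ), |β q.1|) = B - ∑ q ∈ s, |β q| := by
        rw [hB, ← this]; ring
      rw [this]
      linarith
    -- a positive distance δ separating q0 from the other points of s
    have hδ : ∃ δ > (0:ℝ), ∀ q ∈ s, q ≠ q0 → δ ≤ dist (e q) (e q0) := by
      rcases (s.erase q0).eq_empty_or_nonempty with hemp | hne
      · exact ⟨1, one_pos, fun q hq hqne =>
          absurd (Finset.mem_erase.mpr ⟨hqne, hq⟩) (by simp [hemp])⟩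
      · refine ⟨((s.erase q0).image (fun q => dist (e q) (e q0))).min' (hne.image _),
          ?_, ?_⟩
        · obtain ⟨q, hq, hqe⟩ := Finset.mem_image.mp
            (((s.erase q0).image (fun q => dist (e q) (e q0))).min'_mem (hne.image _))
          rw [← hqe]
          refine dist_pos.mpr fun h => ?_
          exact (Finset.mem_erase.mp hq).1 (einj h)
        · intro q hq hqne
          exact Finset.min'_le _ _
            (Finset.mem_image_of_mem _ (Finset.mem_erase.mpr ⟨hqne, hq⟩))
    obtain ⟨δ, hδ0, hδle⟩ := hδ
    -- the tent function
    set f : C(K01, ℝ) := ⟨fun x => max 0 (1 - dist x (e q0) / δ),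
      (continuous_const.max (continuous_const.sub
        ((continuous_id.dist continuous_const).div_const δ)))⟩ with hf
    have hfq0 : f (e q0) = 1 := by
      simp [hf]
    have hfz : ∀ q ∈ s, q ≠ q0 → f (e q) = 0 := by
      intro q hq hqne
      have h1 : δ ≤ dist (e q) (e q0) := hδle q hq hqne
      have h2 : (1:ℝ) ≤ dist (e q) (e q0) / δ := (one_le_div hδ0).mpr h1
      simp only [hf, ContinuousMap.coe_mk]
      rw [max_eq_left]
      linarith
    have hfbd : ∀ x : K01, |f x| ≤ 1 := by
      intro x
      have h1 : (0:ℝ) ≤ dist x (e q0) / δ := div_nonneg dist_nonneg hδ0.le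
      rw [hf]
      simp only [ContinuousMap.coe_mk]
      rw [abs_of_nonneg (le_max_left _ _)]
      apply max_le <;> linarith
    have hlf : l f = 0 := hall f
    have hsplit : ∑ q ∈ s, β q * f (e q) +
        (∑' q : ((↑s : Set Γ)ᶜ : Set Γ), β q.1 * f (e q.1)) = l f :=
      Summable.sum_add_tsum_compl (s := s) (hlsum f)
    have hfin : ∑ q ∈ s, β q * f (e q) = β q0 := by
      rw [Finset.sum_eq_single_of_mem q0 hq0s]
      · rw [hfq0, mul_one]
      · intro q hq hqne
        rw [hfz q hq hqne, mul_zero]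
    have htails : β q0 = -(∑' q : ((↑s : Set Γ)ᶜ : Set Γ), β q.1 * f (e q.1)) := by
      rw [← hfin]; rw [hlf] at hsplit; linarith
    have habs2 : |β q0| ≤ ∑' q : ((↑s : Set Γ)ᶜ : Set Γ), |β q.1| := by
      rw [htails, abs_neg]
      have h1 : |∑' q : ((↑s : Set Γ)ᶜ : Set Γ), β q.1 * f (e q.1)| ≤
          ∑' q : ((↑s : Set Γ)ᶜ : Set Γ), |β q.1 * f (e q.1)| := by
        have := norm_tsum_le_tsum_norm
          (f := fun q : ((↑s : Set Γ)ᶜ : Set Γ) => β q.1 * f (e q.1))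
          ((((hlsum f).subtype ((↑s : Set Γ)ᶜ)).abs).congr
            fun q => (Real.norm_eq_abs _).symm)
        simp only [Real.norm_eq_abs] at this
        exact this
      have h2 : (∑' q : ((↑s : Set Γ)ᶜ : Set Γ), |β q.1 * f (e q.1)|) ≤
          ∑' q : ((↑s : Set Γ)ᶜ : Set Γ), |β q.1| := by
        refine Summable.tsum_le_tsum (fun q => ?_) ((hlsum f).subtype _).abs (hβ.subtype _)
        rw [abs_mul]
        calc |β q.1| * |f (e q.1)| ≤ |β q.1| * 1 :=
              mul_le_mul_of_nonneg_left (hfbd _) (abs_nonneg _)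
          _ = |β q.1| := mul_one _
      exact le_trans h1 h2
    exact lt_of_le_of_lt habs2 htail
  by_contra hne
  exact absurd (main |β q0| (abs_pos.mpr hne)) (lt_irrefl _)

end Stmt7Aux

/-- If `Γ` satisfies the separation condition and the induced measure satisfies the
interior balance equations, then every geometric term in `Γ` lies on the curve `Q = 0`. -/
theorem stmt7 (p : ℤ → ℤ → ℝ)
    (hp : ∀ s ∈ II, ∀ t ∈ II, 0 ≤ p s t)
    (hp1 : ∑ s ∈ II, ∑ t ∈ II, p s t = 1)
    (Γ : Set (ℝ × ℝ)) (hΓc : Γ.Countable)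
    (hΓU : Γ ⊆ Set.Ioo (0 : ℝ) 1 ×ˢ Set.Ioo (0 : ℝ) 1)
    (α : ℝ × ℝ → ℝ) (hα : ∀ q ∈ Γ, α q ≠ 0)
    (hconv : AbsConv Γ α)
    (hsep : Separation Γ)
    (hbal : InteriorBalance p (inducedMeasure Γ α)) :
    ∀ q ∈ Γ, Qf p q.1 q.2 = 0 := by
  intro q hq
  set β : Γ → ℝ := (fun q : Γ => α q * Qf p (q:ℝ×ℝ).1 (q:ℝ×ℝ).2) with hβdef
  have hS := Stmt7Aux.summable_abs_alpha hΓU hconv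
  have hβsum : Summable (fun q : Γ => |β q|) := by
    apply Summable.abs
    exact Stmt7Aux.summable_mul hS (fun q : Γ => Qf p (q:ℝ×ℝ).1 (q:ℝ×ℝ).2) 1
      (fun q => by
        obtain ⟨⟨h1, h2⟩, h3, h4⟩ := hΓU q.2
        exact Stmt7Aux.Qf_abs_le hp hp1 h1.le h2.le h3.le h4.le)
  have hmom : ∀ i j : ℕ, ∑' q' : Γ, β q' * (q':ℝ×ℝ).1 ^ i * (q':ℝ×ℝ).2 ^ j = 0 :=
    fun i j => Stmt7Aux.moments_zero hp hp1 hΓU hconv hbal i j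
  have h0 : β ⟨q, hq⟩ = 0 := Stmt7Aux.atom_zero hΓU β hβsum hmom ⟨q, hq⟩
  rw [hβdef] at h0
  simp only at h0
  rcases mul_eq_zero.mp h0 with h | h
  · exact absurd h (hα q hq)
  · exact h
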